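/- Let α, β, δ, h be positive reals satisfying (i) 1 + αδ > δ and (ii) δ(2+αδ) < (1+αδ)²(1+βδ), and suppose h < min( G_E/H_E , 2(1+αδ)²/G_E ). Then every complex root of the characteristic polynomial λ² − trace(J_E)·λ + det(J_E) of the Euler Jacobian matrix J_E at E* has modulus strictly less than 1; i.e., the interior fixed point E* of the Euler discrete system is locally asymptotically stable. -/

import Mathlib

/-- Jury criterion: if 1 - T + D > 0, 1 + T + D > 0, and D < 1, then every
complex root of λ² - Tλ + D lies strictly inside the unit circle. -/
lemma jury_aux (T D : ℝ) (ha : 0 < 1 - T + D) (hb : 0 < 1 + T + D) (hc : D < 1)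
    (z : ℂ) (hz : z ^ 2 - (T : ℂ) * z + (D : ℂ) = 0) : ‖z‖ < 1 := by
  have h' := hz
  rw [Complex.ext_iff] at h'
  obtain ⟨hre, him⟩ := h'
  simp [pow_two, Complex.mul_re, Complex.mul_im] at hre him
  have hsq : z.re ^ 2 + z.im ^ 2 < 1 := by
    rcases eq_or_ne z.im 0 with hy0 | hy0
    · rw [hy0] at hre ⊢
      have he : z.re ^ 2 - T * z.re + D = 0 := by nlinarith [hre]
      have key1 : (1 - z.re) * (1 + z.re - T) > 0 := by nlinarith
      have key2 : (1 + z.re) * (1 + T - z.re) > 0 := by nlinarith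
      rcases le_or_gt z.re (-1) with hx | hx
      · have h5 : 1 + T - z.re < 0 := by nlinarith [key2]
        exfalso
        nlinarith [he, hc, hx, h5,
          mul_nonneg (by linarith : (0:ℝ) ≤ -(1 + z.re)) (by linarith : (0:ℝ) ≤ -(1 + T - z.re))]
      rcases le_or_gt 1 z.re with hx2 | hx2
      · have h5 : 1 + z.re - T < 0 := by nlinarith [key1]
        exfalso
        nlinarith [he, hc, hx2, h5,
          mul_nonneg (by linarith : (0:ℝ) ≤ z.re - 1) (by linarith : (0:ℝ) ≤ T - z.re - 1)]
      · nlinarith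
    · have hT : T = 2 * z.re := by
        have : z.im * (2 * z.re - T) = 0 := by nlinarith [him]
        rcases mul_eq_zero.1 this with h | h
        · exact absurd h hy0
        · linarith
      nlinarith [hre]
  have habs : ‖z‖ ^ 2 = z.re ^ 2 + z.im ^ 2 := by
    rw [Complex.sq_norm, Complex.normSq_apply]; ring
  nlinarith [norm_nonneg z, habs]

/-- Under the existence and stability conditions of the
continuous model and the step-size restriction h < min(G_E/H_E, 2(1+αδ)²/G_E),
every complex root of the characteristic polynomial λ² − trace(J_E)λ + det(J_E)
of the Euler Jacobian J_E at E* has modulus strictly less than 1: the interior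
fixed point E* of the Euler discrete system is locally asymptotically stable. -/
theorem stmt_13 (α β δ h : ℝ) (hα : 0 < α) (hβ : 0 < β) (hδ : 0 < δ) (hh : 0 < h)
    (h1 : 1 + α * δ > δ)
    (h2 : δ * (2 + α * δ) < (1 + α * δ) ^ 2 * (1 + β * δ))
    (Nstar Pstar GE HE : ℝ)
    (hN : Nstar = (1 + α * δ - δ) / (1 + α * δ))
    (hP : Pstar = δ * Nstar)
    (hGE : GE = (1 + α * δ) ^ 2 * (1 + β * δ) - δ * (2 + α * δ))
    (hHE : HE = β * δ * (1 + α * δ - δ) * (1 + α * δ))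
    (hstep : h < min (GE / HE) (2 * (1 + α * δ) ^ 2 / GE))
    (J : Matrix (Fin 2) (Fin 2) ℝ)
    (hJ : J = !![1 - h * Nstar * (1 - Pstar / (Nstar + α * Pstar) ^ 2),
                 -(h * (Nstar / (Nstar + α * Pstar)) ^ 2);
                 h * β * (Pstar / Nstar) ^ 2,
                 1 - h * β * Pstar / Nstar]) :
    ∀ z : ℂ, z ^ 2 - ((Matrix.trace J : ℝ) : ℂ) * z + ((J.det : ℝ) : ℂ) = 0 →
      ‖z‖ < 1 := by
  intro z hz
  have hs0 : (0:ℝ) < 1 + α * δ := by positivity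
  have hs : (1 + α * δ) ≠ 0 := ne_of_gt hs0
  have hs2 : (0:ℝ) < (1 + α * δ) ^ 2 := by positivity
  have hsd0 : 0 < 1 + α * δ - δ := by linarith
  have hsd : (1 + α * δ - δ) ≠ 0 := ne_of_gt hsd0
  have hNne : Nstar ≠ 0 := by rw [hN]; exact div_ne_zero hsd hs
  have hdeq : Nstar + α * Pstar = 1 + α * δ - δ := by
    rw [hP, hN]; field_simp
  have hGEpos : 0 < GE := by rw [hGE]; linarith
  have hHEpos : 0 < HE := by rw [hHE]; positivity
  have hst1 : h * HE < GE := by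
    have := lt_of_lt_of_le hstep (min_le_left _ _)
    exact (lt_div_iff₀ hHEpos).1 this
  have hst2 : h * GE < 2 * (1 + α * δ) ^ 2 := by
    have := lt_of_lt_of_le hstep (min_le_right _ _)
    exact (lt_div_iff₀ hGEpos).1 this
  -- closed forms for trace and determinant
  have hkey : Matrix.trace J = 2 - h * GE / (1 + α * δ) ^ 2 ∧
      J.det = 1 - h * GE / (1 + α * δ) ^ 2 + h ^ 2 * HE / (1 + α * δ) ^ 2 := by
    subst hJ hGE hHE
    rw [Matrix.trace_fin_two, Matrix.det_fin_two_of]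
    simp only [Matrix.cons_val', Matrix.cons_val_zero, Matrix.cons_val_one, Matrix.head_cons,
      Matrix.empty_val', Matrix.cons_val_fin_one, Matrix.head_fin_const, Matrix.of_apply]
    rw [hdeq, hP, hN]
    constructor <;> (field_simp; ring)
  obtain ⟨hT, hD⟩ := hkey
  -- Jury conditions
  have hApos : 0 < h ^ 2 * HE / (1 + α * δ) ^ 2 := by positivity
  have hA2 : h * GE / (1 + α * δ) ^ 2 < 2 := by
    rw [div_lt_iff₀ hs2]; linarith
  have hBA : h ^ 2 * HE / (1 + α * δ) ^ 2 < h * GE / (1 + α * δ) ^ 2 := by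
    have hlt : h ^ 2 * HE < h * GE := by nlinarith [hst1, hh]
    exact (div_lt_div_iff_of_pos_right hs2).2 hlt
  exact jury_aux (Matrix.trace J) J.det
    (by rw [hT, hD]; linarith) (by rw [hT, hD]; linarith) (by rw [hD]; linarith) z hz
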